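/- Let S1 and S2 be sets of generators of the affine semigroups L1 ∩ P1 and L2 ∩ P2 respectively, and T the generating set of the free (simplicial) affine semigroup L ∩ D, where π1(S1) ⊆ T and π2(S2) ⊆ T. If the affine semigroup L ∩ D has unique factorization into its generators T (i.e., it is a free commutative monoid on T), then the set S1 ×_T S2 = {(s,t) ∈ S1 × S2 : π1(s) = π2(t)} generates the fiber product semigroup (L1 × L2) ∩ (P1 ×_D P2). -/
import Mathlib


/-- A commutative monoid `D` is *free on a subset* `T` if every element of `D` factors
uniquely as a finite sum of elements of `T`, i.e. the summation map from multisets of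
elements of `T` to `D` is bijective. -/
def IsFreeOn {D : Type*} [AddCommMonoid D] (T : Set D) : Prop :=
  Function.Bijective (fun m : Multiset T => (m.map (Subtype.val)).sum)

/-- Pairing lemma: if `s.map f = t.map g` as multisets, there is a multiset of pairs
projecting to `s` and `t` on which `f` and `g` agree. -/
lemma exists_pairing {α β γ : Type*} (f : α → γ) (g : β → γ) :
    ∀ (s : Multiset α) (t : Multiset β), s.map f = t.map g →
      ∃ r : Multiset (α × β), r.map Prod.fst = s ∧ r.map Prod.snd = t ∧
        ∀ p ∈ r, f p.1 = g p.2 := by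
  intro s
  induction s using Multiset.induction with
  | empty =>
    intro t h
    simp only [Multiset.map_zero] at h
    refine ⟨0, by simp, ?_, by simp⟩
    have : t = 0 := by
      rcases Multiset.empty_eq_zero ▸ (Multiset.map_eq_zero.mp h.symm) with h'
      exact h'
    simp [this]
  | cons a s ih =>
    intro t h
    have hmem : f a ∈ t.map g := by rw [← h]; simp
    obtain ⟨b, hb, hfb⟩ := Multiset.mem_map.mp hmem
    obtain ⟨t', rfl⟩ := Multiset.exists_cons_of_mem hb
    rw [Multiset.map_cons, Multiset.map_cons, hfb] at h
    have h' : s.map f = t'.map g := by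
      exact (Multiset.cons_inj_right _).mp h
    obtain ⟨r, hr1, hr2, hr3⟩ := ih t' h'
    refine ⟨(a, b) ::ₘ r, by simp [hr1], by simp [hr2], ?_⟩
    intro p hp
    rcases Multiset.mem_cons.mp hp with rfl | hp
    · exact hfb.symm
    · exact hr3 p hp

/-- Let `S₁`, `S₂` generate the affine semigroups `M₁ = L₁ ∩ P₁` and
`M₂ = L₂ ∩ P₂`, let `T` generate the base semigroup `D = L ∩ D`, with `π₁(S₁) ⊆ T` and
`π₂(S₂) ⊆ T`.  If `D` has unique factorization into the generators `T` (it is a free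
commutative monoid on `T`), then the set
`S₁ ×_T S₂ = {(s, t) ∈ S₁ × S₂ | π₁ s = π₂ t}` generates the fiber product semigroup
`{(x, y) | π₁ x = π₂ y}`. -/
theorem fiberProduct_semigroup_generators
    {M₁ M₂ D : Type*} [AddCommMonoid M₁] [AddCommMonoid M₂] [AddCommMonoid D]
    (π₁ : M₁ →+ D) (π₂ : M₂ →+ D)
    (S₁ : Set M₁) (S₂ : Set M₂) (T : Set D)
    (hS₁ : AddSubmonoid.closure S₁ = ⊤) (hS₂ : AddSubmonoid.closure S₂ = ⊤)
    (hT : AddSubmonoid.closure T = ⊤)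
    (hπ₁ : π₁ '' S₁ ⊆ T) (hπ₂ : π₂ '' S₂ ⊆ T)
    (hfree : IsFreeOn T) :
    AddSubmonoid.closure {p : M₁ × M₂ | p.1 ∈ S₁ ∧ p.2 ∈ S₂ ∧ π₁ p.1 = π₂ p.2}
      = AddMonoidHom.eqLocusM (π₁.comp (AddMonoidHom.fst M₁ M₂))
          (π₂.comp (AddMonoidHom.snd M₁ M₂)) := by
  apply le_antisymm
  · rw [AddSubmonoid.closure_le]
    rintro ⟨x, y⟩ ⟨-, -, hxy⟩
    exact hxy
  · rintro ⟨x, y⟩ (hxy : π₁ x = π₂ y)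
    -- factor x and y
    have hx : x ∈ AddSubmonoid.closure S₁ := hS₁ ▸ AddSubmonoid.mem_top x
    have hy : y ∈ AddSubmonoid.closure S₂ := hS₂ ▸ AddSubmonoid.mem_top y
    obtain ⟨m₁, hm₁, hsum₁⟩ := AddSubmonoid.exists_multiset_of_mem_closure hx
    obtain ⟨m₂, hm₂, hsum₂⟩ := AddSubmonoid.exists_multiset_of_mem_closure hy
    -- lift to multisets over T
    set m₁' : Multiset T :=
      m₁.attach.map (fun s => ⟨π₁ s.1, hπ₁ ⟨s.1, hm₁ s.1 s.2, rfl⟩⟩) with hm₁'def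
    set m₂' : Multiset T :=
      m₂.attach.map (fun s => ⟨π₂ s.1, hπ₂ ⟨s.1, hm₂ s.1 s.2, rfl⟩⟩) with hm₂'def
    have hval₁ : m₁'.map Subtype.val = m₁.map π₁ := by
      rw [hm₁'def, Multiset.map_map]
      conv_rhs => rw [← Multiset.attach_map_val m₁, Multiset.map_map]
      rfl
    have hval₂ : m₂'.map Subtype.val = m₂.map π₂ := by
      rw [hm₂'def, Multiset.map_map]
      conv_rhs => rw [← Multiset.attach_map_val m₂, Multiset.map_map]
      rfl
    have hsum' : (m₁'.map Subtype.val).sum = (m₂'.map Subtype.val).sum := by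
      rw [hval₁, hval₂]
      have h1 : (m₁.map π₁).sum = π₁ x := by
        rw [← hsum₁]; exact (map_multiset_sum π₁ m₁).symm
      have h2 : (m₂.map π₂).sum = π₂ y := by
        rw [← hsum₂]; exact (map_multiset_sum π₂ m₂).symm
      rw [h1, h2, hxy]
    have heq : m₁' = m₂' := hfree.injective hsum'
    have hmaps : m₁.map π₁ = m₂.map π₂ := by rw [← hval₁, ← hval₂, heq]
    obtain ⟨r, hr1, hr2, hr3⟩ := exists_pairing π₁ π₂ m₁ m₂ hmaps
    have hrsum : r.sum = (x, y) := by
      ext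
      · have := map_multiset_sum (AddMonoidHom.fst M₁ M₂) r
        simpa [hr1, hsum₁] using this
      · have := map_multiset_sum (AddMonoidHom.snd M₁ M₂) r
        simpa [hr2, hsum₂] using this
    rw [← hrsum]
    apply AddSubmonoid.multiset_sum_mem
    intro p hp
    apply AddSubmonoid.subset_closure
    refine ⟨?_, ?_, hr3 p hp⟩
    · apply hm₁; rw [← hr1]; exact Multiset.mem_map_of_mem _ hp
    · apply hm₂; rw [← hr2]; exact Multiset.mem_map_of_mem _ hp
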